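/- For any two dominants f, g in a group with a bi-invariant partial order induced by a normal cone, γ(f,g) · γ(g,f) ≥ 1. -/
import Mathlib


open Filter

/-- For any two dominants `f, g` in a group with a bi-invariant partial
order induced by a normal cone, the relative growths satisfy `γ(f,g) · γ(g,f) ≥ 1`. -/
theorem relative_growth_product_ge_one {D : Type*} [Group D] (C : Set D)
    (hmul : ∀ a b, a ∈ C → b ∈ C → a * b ∈ C)
    (hconj : ∀ a b, a ∈ C → b * a * b⁻¹ ∈ C)
    (hone : (1 : D) ∈ C)
    (hanti : ∀ a b : D, a * b⁻¹ ∈ C → b * a⁻¹ ∈ C → a = b)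
    (f g : D)
    (hf : f ∈ C ∧ f ≠ 1 ∧ ∀ x : D, ∃ n : ℕ, f ^ n * x⁻¹ ∈ C)
    (hg : g ∈ C ∧ g ≠ 1 ∧ ∀ x : D, ∃ n : ℕ, g ^ n * x⁻¹ ∈ C)
    (γfg γgf : ℕ → ℤ)
    (hγfg : ∀ n : ℕ, IsLeast {p : ℤ | f ^ p * (g ^ n)⁻¹ ∈ C} (γfg n))
    (hγgf : ∀ n : ℕ, IsLeast {p : ℤ | g ^ p * (f ^ n)⁻¹ ∈ C} (γgf n))
    (A B : ℝ)
    (hA : Tendsto (fun n : ℕ => (γfg n : ℝ) / n) atTop (nhds A))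
    (hB : Tendsto (fun n : ℕ => (γgf n : ℝ) / n) atTop (nhds B)) :
    1 ≤ A * B := by
  obtain ⟨hfC, hf1, hfdom⟩ := hf
  obtain ⟨hgC, hg1, _⟩ := hg
  -- natural powers of cone elements are in the cone
  have hCpow : ∀ a : D, a ∈ C → ∀ k : ℕ, a ^ k ∈ C := by
    intro a ha k
    induction k with
    | zero => simpa using hone
    | succ n ih => rw [pow_succ]; exact hmul _ _ ih ha
  have hCzpow : ∀ a : D, a ∈ C → ∀ k : ℤ, 0 ≤ k → a ^ k ∈ C := by
    intro a ha k hk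
    lift k to ℕ using hk
    rw [zpow_natCast]; exact hCpow a ha k
  -- transitivity of the order
  have htrans : ∀ a b c : D, a * b⁻¹ ∈ C → b * c⁻¹ ∈ C → a * c⁻¹ ∈ C := by
    intro a b c h1 h2
    have := hmul _ _ h1 h2
    simpa [mul_assoc] using this
  -- a^p ≥ a^q implies q ≤ p for a ∈ C, a ≠ 1
  have key : ∀ a : D, a ∈ C → a ≠ 1 → ∀ p q : ℤ, a ^ p * (a ^ q)⁻¹ ∈ C → q ≤ p := by
    intro a ha hane p q h
    by_contra hlt
    push_neg at hlt
    rw [← zpow_sub] at h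
    set k : ℤ := q - p with hk
    have hk0 : 0 < k := by omega
    have h1 : a ^ k ∈ C := hCzpow a ha k hk0.le
    have hik : (a ^ k)⁻¹ = a ^ (p - q) := by
      rw [← zpow_neg]; congr 1; omega
    have h2 : a ^ k = 1 := by
      apply hanti (a ^ k) 1 (by simpa using h1)
      rw [one_mul, hik]; exact h
    have hinv : a⁻¹ ∈ C := by
      have := hCzpow a ha (k - 1) (by omega)
      rwa [zpow_sub_one, h2, one_mul] at this
    exact hane (hanti a 1 (by simpa using ha) (by simpa using hinv))
  -- γgf is nonnegative
  have hγgf0 : ∀ n : ℕ, 0 ≤ γgf n := by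
    intro n
    have h1 := (hγgf n).1
    have h2 : g ^ γgf n ∈ C := by
      have := hmul _ _ h1 (hCpow f hfC n)
      simpa [mul_assoc] using this
    exact key g hgC hg1 (γgf n) 0 (by simpa using h2)
  -- γgf tends to infinity
  have hgtop : Tendsto γgf atTop atTop := by
    rw [tendsto_atTop]
    intro K
    obtain ⟨N, hN⟩ := hfdom (g ^ K.toNat * f)
    rw [eventually_atTop]
    refine ⟨N + 1, fun n hn => ?_⟩
    by_contra hle
    push_neg at hle
    -- g^(K.toNat) ≥ g^(γgf n) ≥ f^n and f^(N-1) ≥ g^(K.toNat)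
    have hKn : (0 : ℤ) ≤ (K.toNat : ℤ) - γgf n := by
      have := Int.self_le_toNat K; omega
    have hA1 : g ^ ((K.toNat : ℤ)) * (g ^ γgf n)⁻¹ ∈ C := by
      rw [← zpow_sub]; exact hCzpow g hgC _ hKn
    have hA2 : g ^ γgf n * (f ^ ((n : ℤ)))⁻¹ ∈ C := by
      rw [zpow_natCast]; exact (hγgf n).1
    have hA3 : g ^ ((K.toNat : ℤ)) * (f ^ ((n : ℤ)))⁻¹ ∈ C := htrans _ _ _ hA1 hA2
    have hN' : f ^ ((N : ℤ) - 1) * (g ^ ((K.toNat : ℤ)))⁻¹ ∈ C := by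
      have : f ^ ((N : ℤ) - 1) * (g ^ ((K.toNat : ℤ)))⁻¹
          = f ^ N * (g ^ K.toNat * f)⁻¹ := by
        rw [zpow_sub_one, zpow_natCast, zpow_natCast, mul_inv_rev]
        group
      rw [this]; exact hN
    have hA4 : f ^ ((N : ℤ) - 1) * (f ^ ((n : ℤ)))⁻¹ ∈ C := htrans _ _ _ hN' hA3
    have := key f hfC hf1 _ _ hA4
    omega
  -- key composition inequality
  have hcomp : ∀ n : ℕ, (n : ℤ) ≤ γfg ((γgf n).toNat) := by
    intro n
    set m := (γgf n).toNat with hm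
    have hmn : ((m : ℤ)) = γgf n := Int.toNat_of_nonneg (hγgf0 n)
    have h1 : f ^ γfg m * (g ^ ((m : ℤ)))⁻¹ ∈ C := by
      rw [zpow_natCast]; exact (hγfg m).1
    have h2 : g ^ ((m : ℤ)) * (f ^ ((n : ℤ)))⁻¹ ∈ C := by
      rw [hmn, zpow_natCast]; exact (hγgf n).1
    exact key f hfC hf1 _ _ (htrans _ _ _ h1 h2)
  -- (γgf n).toNat tends to infinity
  have hmtop : Tendsto (fun n => (γgf n).toNat) atTop atTop := by
    rw [tendsto_atTop]
    intro b
    filter_upwards [hgtop.eventually_ge_atTop (b : ℤ)] with n hn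
    omega
  -- product of limits
  have hprod : Tendsto (fun n : ℕ =>
      ((γfg ((γgf n).toNat) : ℝ) / ((γgf n).toNat)) * (((γgf n).toNat : ℝ) / n))
      atTop (nhds (A * B)) := by
    apply Tendsto.mul
    · exact hA.comp hmtop
    · apply hB.congr
      intro n
      congr 1
      exact_mod_cast (Int.toNat_of_nonneg (hγgf0 n)).symm
  have hfinal : Tendsto (fun n : ℕ => (γfg ((γgf n).toNat) : ℝ) / n)
      atTop (nhds (A * B)) := by
    apply hprod.congr'
    filter_upwards [hmtop.eventually_ge_atTop 1] with n hn
    have hm0 : (((γgf n).toNat : ℝ)) ≠ 0 := by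
      simp only [ne_eq, Nat.cast_eq_zero]; omega
    field_simp
  have h1le : ∀ᶠ n in atTop, (1 : ℝ) ≤ (γfg ((γgf n).toNat) : ℝ) / n := by
    filter_upwards [eventually_ge_atTop 1] with n hn
    rw [le_div_iff₀ (by positivity)]
    rw [one_mul]
    exact_mod_cast hcomp n
  exact ge_of_tendsto hfinal h1le
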